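/- If X ⊆ ℙ^M is an irreducible non-degenerate projective variety and σ_r(X) is not a linear space, then for any r ≥ 2 the singular locus of σ_r(X) contains σ_{r-1}(X). -/

import Mathlib

/-!
STATEMENT 0: If X ⊆ ℙ^M is an irreducible non-degenerate projective variety and σ_r(X)
is not a linear space, then for any r ≥ 2 the singular locus of σ_r(X) contains σ_{r-1}(X).

We model a projective variety by its affine cone `X ⊆ ℂ^{M+1}`, which is Zariski closed
(`X = zariskiClosure X`), closed under scalar multiplication, irreducible (its vanishing
ideal is prime), and non-degenerate (its linear span is everything).  The `r`-th secant
variety is modelled by its affine cone: the Zariski closure of the set of vectors lying in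
the span of `r` points of `X`.  A nonzero point `x` of the cone is a singular point of the
projective variety when the Zariski tangent space at `x` (cut out by the differentials of
all polynomials in the vanishing ideal) has dimension strictly larger than the dimension of
the cone (the Krull dimension of its coordinate ring).
-/

open MvPolynomial

/-- Zariski closure of a subset of affine space `(σ → ℂ)`. -/
noncomputable def zariskiClosure {σ : Type*} (S : Set (σ → ℂ)) : Set (σ → ℂ) :=
  zeroLocus ℂ (vanishingIdeal ℂ S)

/-- The affine cone over the `r`-th secant variety of the projective variety with affine
cone `X`. -/
noncomputable def secantCone {M : ℕ} (r : ℕ) (X : Set (Fin (M + 1) → ℂ)) :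
    Set (Fin (M + 1) → ℂ) :=
  zariskiClosure {v | ∃ f : Fin r → (Fin (M + 1) → ℂ),
    (∀ i, f i ∈ X) ∧ v ∈ Submodule.span ℂ (Set.range f)}

/-- The Zariski tangent space at a point `x` of the affine set `S`: common kernel of the
differentials at `x` of all polynomials vanishing on `S`. -/
noncomputable def zariskiTangent {M : ℕ} (S : Set (Fin (M + 1) → ℂ))
    (x : Fin (M + 1) → ℂ) : Submodule ℂ (Fin (M + 1) → ℂ) where
  carrier := {v | ∀ f ∈ vanishingIdeal ℂ S, ∑ i, v i * eval x (pderiv i f) = 0}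
  add_mem' := by
    intro a b ha hb f hf
    have ha' := ha f hf
    have hb' := hb f hf
    simp only [Set.mem_setOf_eq, Pi.add_apply, add_mul, Finset.sum_add_distrib, ha', hb',
      add_zero]
  zero_mem' := by
    intro f hf
    simp
  smul_mem' := by
    intro c a ha f hf
    have ha' := ha f hf
    simp only [Set.mem_setOf_eq, Pi.smul_apply, smul_eq_mul, mul_assoc, ← Finset.mul_sum,
      ha', mul_zero]

/-- The coordinate ring `ℂ[x_0,…,x_M]/I(S)` of an affine set `S`. -/
noncomputable abbrev coordRing {M : ℕ} (S : Set (Fin (M + 1) → ℂ)) : Type _ :=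
  MvPolynomial (Fin (M + 1)) ℂ ⧸ vanishingIdeal ℂ S

/-- A nonzero point of the cone is a singular point of the corresponding projective
variety when the Zariski tangent space is bigger than the dimension. -/
noncomputable def IsSingularPoint {M : ℕ} (S : Set (Fin (M + 1) → ℂ))
    (x : Fin (M + 1) → ℂ) : Prop :=
  ringKrullDim (coordRing S) < (Module.finrank ℂ (zariskiTangent S x) : WithBot ℕ∞)


/- ### Auxiliary development ### -/

noncomputable def nestCL {R : Type*} [CommRing R] : ∀ {m : ℕ}, (Fin m → R) → (Fin m → ℕ) → (Fin m → R) → R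
  | 0, _, _, _ => 1
  | (_ + 1), x, k, a =>
      x 0 ^ k 0 * (nestCL (Fin.tail x) (Fin.tail k) (Fin.tail a) + a 0 * x 0)

lemma nestCL_map {R S : Type*} [CommRing R] [CommRing S] (φ : R →+* S) :
    ∀ {m : ℕ} (x : Fin m → R) (k : Fin m → ℕ) (a : Fin m → R),
    φ (nestCL x k a) = nestCL (φ ∘ x) k (φ ∘ a)
  | 0, _, _, _ => by simp [nestCL]
  | (m + 1), x, k, a => by
      simp only [nestCL, map_mul, map_add, map_pow, nestCL_map φ (Fin.tail x)]
      rfl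


/-- Every nonzero multivariate polynomial is, up to a nonzero scalar, a nested
Coquand–Lombardi expression in the variables. -/
lemma nestCL_decomp {K : Type*} [Field K] : ∀ (m : ℕ) (Q : MvPolynomial (Fin m) K), Q ≠ 0 →
    ∃ (c : K) (k : Fin m → ℕ) (a : Fin m → MvPolynomial (Fin m) K), c ≠ 0 ∧
      Q = c • nestCL (fun i => X i) k a := by
  intro m
  induction m with
  | zero =>
    intro Q hQ
    refine ⟨coeff 0 Q, Fin.elim0, Fin.elim0, ?_, ?_⟩
    · intro h
      exact hQ (by rw [eq_C_of_isEmpty Q, h, map_zero])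
    · conv_lhs => rw [eq_C_of_isEmpty Q]
      show MvPolynomial.C (coeff 0 Q) = (coeff 0 Q) • nestCL _ _ _
      simp [nestCL, MvPolynomial.smul_eq_C_mul]
  | succ m ih =>
    -- the images of the variables under `finSuccEquiv`
    set E : Fin (m + 1) → Polynomial (MvPolynomial (Fin m) K) :=
      fun i => Fin.cases Polynomial.X (fun j => Polynomial.C (X j)) i with hE
    -- P-side decomposition by strong induction on the degree
    have key : ∀ (N : ℕ) (P : Polynomial (MvPolynomial (Fin m) K)), P.natDegree ≤ N → P ≠ 0 →
        ∃ (c : K) (k : Fin (m + 1) → ℕ) (a : Fin (m + 1) → Polynomial (MvPolynomial (Fin m) K)),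
          c ≠ 0 ∧ P = c • nestCL E k a := by
      intro N
      induction N with
      | zero =>
        intro P hdeg hP
        -- degree 0 : P = C (P.coeff 0), and P.coeff 0 ≠ 0
        have hPC : P = Polynomial.C (P.coeff 0) := Polynomial.eq_C_of_natDegree_eq_zero
          (Nat.le_zero.mp hdeg)
        have hc0 : P.coeff 0 ≠ 0 := fun h => hP (by rw [hPC, h, map_zero])
        obtain ⟨c, k, a, hc, hdec⟩ := ih (P.coeff 0) hc0
        refine ⟨c, Fin.cons 0 k, Fin.cons 0 (fun i => Polynomial.C (a i)), hc, ?_⟩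
        show P = c • nestCL E (Fin.cons 0 k) (Fin.cons 0 (fun i => Polynomial.C (a i)))
        have htail : Fin.tail E = fun j : Fin m => Polynomial.C (X j) := by
          funext j; simp [hE, Fin.tail]
        simp only [nestCL, Fin.cons_zero, pow_zero, one_mul, Fin.tail_cons]
        rw [htail]
        have : nestCL (fun j : Fin m => Polynomial.C (X j)) k (fun i => Polynomial.C (a i)) =
            Polynomial.C (nestCL (fun i => X i) k a) := by
          rw [nestCL_map (Polynomial.C : MvPolynomial (Fin m) K →+* _)]; rfl
        have hsC : c • Polynomial.C (nestCL (fun i => X i) k a) =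
            Polynomial.C (c • nestCL (fun i => X i) k a) := Polynomial.smul_C c _
        rw [this, zero_mul, add_zero, hsC, ← hdec]
        exact hPC
      | succ N ihN =>
        intro P hdeg hP
        by_cases hc0 : P.coeff 0 ≠ 0
        · -- same as base case
          obtain ⟨c, k, a, hc, hdec⟩ := ih (P.coeff 0) hc0
          refine ⟨c, Fin.cons 0 k,
            Fin.cons (c⁻¹ • P.divX) (fun i => Polynomial.C (a i)), hc, ?_⟩
          have htail : Fin.tail E = fun j : Fin m => Polynomial.C (X j) := by
            funext j; simp [hE, Fin.tail]
          simp only [nestCL, Fin.cons_zero, pow_zero, one_mul, Fin.tail_cons]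
          rw [htail]
          have h1 : nestCL (fun j : Fin m => Polynomial.C (X j)) k (fun i => Polynomial.C (a i)) =
              Polynomial.C (nestCL (fun i => X i) k a) := by
            rw [nestCL_map (Polynomial.C : MvPolynomial (Fin m) K →+* _)]; rfl
          rw [h1]
          have hE0 : E 0 = Polynomial.X := rfl
          have hsC : c • Polynomial.C (nestCL (fun i => X i) k a) =
              Polynomial.C (c • nestCL (fun i => X i) k a) := Polynomial.smul_C c _
          rw [hE0, smul_add, hsC, ← hdec, smul_mul_assoc,
            smul_inv_smul₀ hc]
          conv_lhs => rw [← Polynomial.X_mul_divX_add P]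
          ring
        · push_neg at hc0
          have hdvd : Polynomial.X * P.divX = P := by
            have := Polynomial.X_mul_divX_add P
            rwa [hc0, map_zero, add_zero] at this
          have hdivne : P.divX ≠ 0 := by
            intro h; apply hP; rw [← hdvd, h, mul_zero]
          have hdd : P.divX.natDegree ≤ N := by
            have := Polynomial.natDegree_divX_eq_natDegree_tsub_one (p := P)
            omega
          obtain ⟨c, k, a, hc, hdec⟩ := ihN P.divX hdd hdivne
          refine ⟨c, Fin.cons (k 0 + 1) (Fin.tail k), a, hc, ?_⟩
          have hE0 : E 0 = Polynomial.X := rfl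
          show P = c • nestCL E (Fin.cons (k 0 + 1) (Fin.tail k)) a
          simp only [nestCL, Fin.cons_zero, Fin.tail_cons]
          rw [← hdvd, hdec]
          have hkk : (fun i => k i) = Fin.cons (k 0) (Fin.tail k) := (Fin.cons_self_tail k).symm
          conv_lhs => rw [show k = Fin.cons (k 0) (Fin.tail k) from (Fin.cons_self_tail k).symm]
          simp only [nestCL, Fin.cons_zero, Fin.tail_cons]
          rw [mul_smul_comm]
          refine congrArg (fun y => c • y) ?_
          rw [hE0]
          ring
      done
    intro Q hQ
    have hPne : finSuccEquiv K m Q ≠ 0 := fun h => hQ (by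
      have := congrArg (finSuccEquiv K m).symm h
      simpa using this)
    obtain ⟨c, k, a, hc, hdec⟩ := key _ _ le_rfl hPne
    refine ⟨c, k, fun i => (finSuccEquiv K m).symm (a i), hc, ?_⟩
    have := congrArg (finSuccEquiv K m).symm hdec
    rw [AlgEquiv.symm_apply_apply, map_smul] at this
    rw [this]
    congr 1
    rw [show ((finSuccEquiv K m).symm (nestCL E k a)) =
      ((finSuccEquiv K m).symm : Polynomial (MvPolynomial (Fin m) K) →+* _) (nestCL E k a) from rfl,
      nestCL_map]
    congr 1
    funext i
    refine Fin.cases ?_ (fun j => ?_) i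
    · show (finSuccEquiv K m).symm (E 0) = X 0
      rw [show E 0 = Polynomial.X from rfl, ← finSuccEquiv_X_zero (R := K) (n := m),
        AlgEquiv.symm_apply_apply]
    · show (finSuccEquiv K m).symm (E j.succ) = X j.succ
      rw [show E j.succ = Polynomial.C (X j) from rfl, ← finSuccEquiv_X_succ (R := K) (n := m),
        AlgEquiv.symm_apply_apply]

/-- Chain collapsing: if the nested expression lies in the bottom prime of a strict chain,
then `1` lies in the top prime. -/
lemma nestCL_chain {R : Type*} [CommRing R] : ∀ {m : ℕ} (q : Fin (m + 1) → Ideal R), (∀ i, (q i).IsPrime) →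
    (∀ i : Fin m, q i.castSucc < q i.succ) →
    ∀ (x : Fin m → R) (k : Fin m → ℕ) (a : Fin m → R),
    (∀ i : Fin m, x i ∈ q i.succ ∧ x i ∉ q i.castSucc) →
    nestCL x k a ∈ q 0 → (1 : R) ∈ q (Fin.last m)
  | 0, q, _, _, x, k, a, _, h => h
  | (m + 1), q, hq, hlt, x, k, a, hx, h => by
      have hx0 : x 0 ∉ q 0 := (hx 0).2
      have h1 : nestCL (Fin.tail x) (Fin.tail k) (Fin.tail a) + a 0 * x 0 ∈ q 0 := by
        rcases ((hq 0).mem_or_mem h) with h' | h'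
        · exact absurd ((hq 0).mem_of_pow_mem _ h') hx0
        · exact h'
      have h01 : q 0 ≤ q 1 := le_of_lt (by simpa using hlt 0)
      have h2 : nestCL (Fin.tail x) (Fin.tail k) (Fin.tail a) ∈ q 1 := by
        have : a 0 * x 0 ∈ q 1 := Ideal.mul_mem_left _ _ (by simpa using (hx 0).1)
        simpa using (q 1).sub_mem (h01 h1) this
      have := nestCL_chain (fun i => q i.succ) (fun i => hq _)
        (fun i => by show q i.castSucc.succ < q i.succ.succ; rw [Fin.succ_castSucc]; exact hlt i.succ)
        (Fin.tail x) (Fin.tail k) (Fin.tail a)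
        (fun i => by
          refine ⟨?_, ?_⟩
          · exact (hx i.succ).1
          · show x i.succ ∉ q i.castSucc.succ; rw [Fin.succ_castSucc]; exact (hx i.succ).2)
        (by simpa [Fin.tail] using h2)
      simpa [Fin.succ_last] using this


lemma totalDegree_aeval_le' {K : Type*} [Field K] {m n : ℕ} (f : Fin m → MvPolynomial (Fin n) K) (d : ℕ)
    (hd : ∀ i, (f i).totalDegree ≤ d) (Q : MvPolynomial (Fin m) K) :
    (aeval f Q).totalDegree ≤ Q.totalDegree * d := by
  rw [aeval_def, eval₂_eq]
  refine (totalDegree_finset_sum _ _).trans (Finset.sup_le fun α hα => ?_)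
  refine (totalDegree_mul _ _).trans ?_
  rw [show (algebraMap K (MvPolynomial (Fin n) K)) = C from rfl, totalDegree_C, zero_add]
  refine (totalDegree_finset_prod _ _).trans ?_
  calc ∑ i ∈ α.support, (f i ^ α i).totalDegree
      ≤ ∑ i ∈ α.support, α i * d := by
        refine Finset.sum_le_sum fun i _ => ?_
        exact (totalDegree_pow _ _).trans (Nat.mul_le_mul_left _ (hd i))
    _ = (∑ i ∈ α.support, α i) * d := by rw [Finset.sum_mul]
    _ ≤ Q.totalDegree * d := by
        refine Nat.mul_le_mul_right _ ?_
        exact Finset.le_sup (f := fun α : Fin m →₀ ℕ => α.sum fun _ e => e) hα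

lemma nat_card_degset_le (m N : ℕ) :
    Nat.card {α : Fin m →₀ ℕ | (α.sum fun _ e => e) ≤ N} ≤ (N + 1) ^ m := by
  have hle : ∀ (α : Fin m →₀ ℕ) (i : Fin m), α i ≤ α.sum fun _ e => e := by
    intro α i
    by_cases h : i ∈ α.support
    · exact Finset.single_le_sum (fun j _ => Nat.zero_le _) h
    · simp [Finsupp.notMem_support_iff.mp h]
  have hinj : Function.Injective
      (fun (α : {α : Fin m →₀ ℕ | (α.sum fun _ e => e) ≤ N}) (i : Fin m) =>
        (⟨(α : Fin m →₀ ℕ) i, Nat.lt_succ_of_le ((hle α i).trans α.2)⟩ : Fin (N + 1))) := by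
    intro α β h
    ext i
    exact congrArg Fin.val (congrFun h i)
  calc Nat.card {α : Fin m →₀ ℕ | (α.sum fun _ e => e) ≤ N}
      ≤ Nat.card (Fin m → Fin (N + 1)) := Nat.card_le_card_of_injective _ hinj
    _ = (N + 1) ^ m := by simp [Nat.card_eq_fintype_card]

lemma le_nat_card_degset (m s : ℕ) :
    (s + 1) ^ m ≤ Nat.card {α : Fin m →₀ ℕ | (α.sum fun _ e => e) ≤ m * s} := by
  have : Finite {α : Fin m →₀ ℕ | (α.sum fun _ e => e) ≤ m * s} := by
    have hle : ∀ (α : Fin m →₀ ℕ) (i : Fin m), α i ≤ α.sum fun _ e => e := by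
      intro α i
      by_cases h : i ∈ α.support
      · exact Finset.single_le_sum (fun j _ => Nat.zero_le _) h
      · simp [Finsupp.notMem_support_iff.mp h]
    exact Finite.of_injective
      (fun (α : {α : Fin m →₀ ℕ | (α.sum fun _ e => e) ≤ m * s}) (i : Fin m) =>
        (⟨(α : Fin m →₀ ℕ) i, Nat.lt_succ_of_le ((hle α i).trans α.2)⟩ : Fin (m * s + 1)))
      (by intro α β h; ext i; exact congrArg Fin.val (congrFun h i))
  have hinj : Function.Injective
      (fun (v : Fin m → Fin (s + 1)) =>
        (⟨Finsupp.equivFunOnFinite.symm (fun i => (v i : ℕ)), by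
          simp only [Set.mem_setOf_eq]
          rw [Finsupp.sum_fintype _ _ (fun _ => rfl)]
          calc ∑ i, (Finsupp.equivFunOnFinite.symm (fun i => ((v i : ℕ)))) i
              = ∑ i : Fin m, (v i : ℕ) := by simp [Finsupp.equivFunOnFinite]; rfl
            _ ≤ ∑ _i : Fin m, s := Finset.sum_le_sum fun i _ => Nat.lt_succ_iff.mp (v i).2
            _ = m * s := by simp [Finset.sum_const, mul_comm]
          ⟩ : {α : Fin m →₀ ℕ | (α.sum fun _ e => e) ≤ m * s})) := by
    intro v w h
    funext i
    have := congrArg (fun (α : {α : Fin m →₀ ℕ | (α.sum fun _ e => e) ≤ m * s}) =>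
      (α : Fin m →₀ ℕ) i) h
    simp only [Finsupp.equivFunOnFinite] at this
    exact Fin.ext this
  calc (s + 1) ^ m = Nat.card (Fin m → Fin (s + 1)) := by simp [Nat.card_eq_fintype_card]
    _ ≤ _ := Nat.card_le_card_of_injective _ hinj

/-- Any `n+1` polynomials in `n` variables over a field are algebraically dependent. -/
lemma exists_algebraic_dependence {K : Type*} [Field K] (n : ℕ) (f : Fin (n + 1) → MvPolynomial (Fin n) K) :
    ∃ Q : MvPolynomial (Fin (n + 1)) K, Q ≠ 0 ∧ aeval f Q = 0 := by
  set d := (Finset.univ.sup fun i => (f i).totalDegree) + 1 with hd_def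
  have hd : ∀ i, (f i).totalDegree ≤ d := fun i => by
    rw [hd_def]; exact Nat.le_succ_of_le (Finset.le_sup (f := fun i => (f i).totalDegree) (Finset.mem_univ i))
  have hd1 : 1 ≤ d := Nat.le_add_left 1 _
  set c := 2 * (n + 1) * d with hc_def
  set s := c ^ n with hs_def
  set N := (n + 1) * s with hN_def
  have hs1 : 1 ≤ s := Nat.one_le_pow _ _ (by positivity)
  -- the two submodules
  set dom := restrictTotalDegree (Fin (n + 1)) K N
  set cod := restrictTotalDegree (Fin n) K (N * d)
  have hmap : ∀ Q ∈ dom, aeval f Q ∈ cod := by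
    intro Q hQ
    rw [mem_restrictTotalDegree] at hQ ⊢
    exact (totalDegree_aeval_le' f d hd Q).trans (Nat.mul_le_mul_right _ hQ)
  let φ : dom →ₗ[K] cod :=
    ((aeval f).toLinearMap.comp dom.subtype).codRestrict cod (fun Q => hmap Q Q.2)
  -- dimension comparison
  have hbdom : Module.finrank K dom = Nat.card
      {α : Fin (n + 1) →₀ ℕ | (α.sum fun _ e => e) ≤ N} :=
    Module.finrank_eq_nat_card_basis (basisRestrictSupport K _)
  have hbcod : Module.finrank K cod = Nat.card
      {α : Fin n →₀ ℕ | (α.sum fun _ e => e) ≤ N * d} :=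
    Module.finrank_eq_nat_card_basis (basisRestrictSupport K _)
  have hrankdom : (s + 1) ^ (n + 1) ≤ Module.finrank K dom := by
    rw [hbdom]
    exact le_nat_card_degset (n + 1) s
  have hrankcod : Module.finrank K cod ≤ (N * d + 1) ^ n := by
    rw [hbcod]
    exact nat_card_degset_le n (N * d)
  have harith : (N * d + 1) ^ n < (s + 1) ^ (n + 1) := by
    have h1 : N * d + 1 ≤ c * s := by
      have : 0 < (n + 1) * s * d := Nat.mul_pos (Nat.mul_pos (Nat.succ_pos n) hs1) hd1
      calc N * d + 1 = (n + 1) * s * d + 1 := by rw [hN_def]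
        _ ≤ (n + 1) * s * d + (n + 1) * s * d := by omega
        _ = c * s := by ring
    calc (N * d + 1) ^ n ≤ (c * s) ^ n := Nat.pow_le_pow_left h1 n
      _ = c ^ n * s ^ n := by rw [mul_pow]
      _ = s * s ^ n := by rw [hs_def]
      _ = s ^ (n + 1) := by ring
      _ < (s + 1) ^ (n + 1) := Nat.pow_lt_pow_left (Nat.lt_succ_self s) (Nat.succ_ne_zero n)
  have hlt : Module.finrank K cod < Module.finrank K dom :=
    lt_of_le_of_lt hrankcod (lt_of_lt_of_le harith hrankdom)
  have hker := LinearMap.ker_ne_bot_of_finrank_lt (f := φ) hlt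
  obtain ⟨Q, hQker, hQne⟩ := Submodule.ne_bot_iff _ |>.mp hker
  refine ⟨(Q : MvPolynomial (Fin (n + 1)) K), ?_, ?_⟩
  · intro h
    exact hQne (Subtype.ext h)
  · have := congrArg (Subtype.val) (LinearMap.mem_ker.mp hQker)
    simpa [φ] using this


/-- There is no strictly increasing chain of `n+2` primes in `K[x_1,…,x_n]`. -/
lemma no_prime_chain {K : Type*} [Field K] (n : ℕ) (q : Fin (n + 2) → Ideal (MvPolynomial (Fin n) K))
    (hq : ∀ i, (q i).IsPrime) (hmono : StrictMono q) : False := by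
  have hlt : ∀ i : Fin (n + 1), q i.castSucc < q i.succ :=
    fun i => hmono (Fin.castSucc_lt_succ (i := i))
  choose x hx1 hx2 using fun i : Fin (n + 1) => SetLike.exists_of_lt (hlt i)
  obtain ⟨Q, hQ, hQ0⟩ := exists_algebraic_dependence n x
  obtain ⟨c, k, a, hc, hdec⟩ := nestCL_decomp (n + 1) Q hQ
  have hnest : nestCL x k (fun i => aeval x (a i)) = 0 := by
    have h1 := congrArg (aeval x) hdec
    rw [hQ0, map_smul] at h1
    have h2 : (aeval x) (nestCL (fun i => X i) k a)
        = nestCL x k (fun i => aeval x (a i)) := by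
      rw [show ((aeval x) (nestCL (fun i => X i) k a)) =
        ((aeval x : MvPolynomial (Fin (n + 1)) K →ₐ[K] MvPolynomial (Fin n) K) :
          MvPolynomial (Fin (n + 1)) K →+* MvPolynomial (Fin n) K) (nestCL (fun i => X i) k a)
        from rfl, nestCL_map]
      congr 1
      funext i
      simp
    rw [h2] at h1
    exact (smul_eq_zero.mp h1.symm).resolve_left hc
  have h0 : nestCL x k (fun i => aeval x (a i)) ∈ q 0 := by rw [hnest]; exact (q 0).zero_mem
  have hone := nestCL_chain q hq hlt x k _ (fun i => ⟨hx1 i, hx2 i⟩) h0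
  exact (hq (Fin.last _)).ne_top ((Ideal.eq_top_iff_one _).mpr hone)

lemma no_long_prime_chain {K : Type*} [Field K] (n m : ℕ) (hm : n + 2 ≤ m)
    (q : Fin m → Ideal (MvPolynomial (Fin n) K))
    (hq : ∀ i, (q i).IsPrime) (hmono : StrictMono q) : False :=
  no_prime_chain n (fun i : Fin (n + 2) => q (Fin.castLE hm i))
    (fun i => hq _) (hmono.comp (Fin.strictMono_castLE hm))

/-- The Krull dimension of a proper quotient of `K[x_1,…,x_n]` is less than `n`. -/
lemma ringKrullDim_quotient_lt {K : Type*} [Field K] (n : ℕ) (I : Ideal (MvPolynomial (Fin n) K)) (hI : I ≠ ⊥) :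
    ringKrullDim (MvPolynomial (Fin n) K ⧸ I) < (n : WithBot ℕ∞) := by
  have hlen : ∀ l : LTSeries (PrimeSpectrum (MvPolynomial (Fin n) K ⧸ I)), l.length + 1 ≤ n := by
    intro l
    by_contra hcon
    push_neg at hcon
    set g : Fin (l.length + 1) → Ideal (MvPolynomial (Fin n) K) :=
      fun i => ((l i).asIdeal).comap (Ideal.Quotient.mk I) with hg
    have hgI : ∀ i, I ≤ g i := by
      intro i
      intro y hy
      show Ideal.Quotient.mk I y ∈ (l i).asIdeal
      rw [Ideal.Quotient.eq_zero_iff_mem.mpr hy]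
      exact (l i).asIdeal.zero_mem
    have hgmono : StrictMono g := by
      intro i j hij
      have hlt := l.strictMono hij
      refine lt_of_le_of_ne (Ideal.comap_mono (le_of_lt hlt)) ?_
      intro h
      have := Ideal.comap_injective_of_surjective (Ideal.Quotient.mk I)
        Ideal.Quotient.mk_surjective h
      exact (ne_of_lt hlt) (PrimeSpectrum.ext this)
    set q : Fin (l.length + 2) → Ideal (MvPolynomial (Fin n) K) := Fin.cons ⊥ g with hq
    have hq0 : q 0 = ⊥ := by simp [hq]
    have hqs : ∀ j : Fin (l.length + 1), q j.succ = g j := fun j => by simp [hq]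
    have hqprime : ∀ i, (q i).IsPrime := by
      intro i
      refine Fin.cases ?_ (fun j => ?_) i
      · rw [hq0]; exact Ideal.bot_prime
      · rw [hqs]; exact Ideal.IsPrime.comap _
    have hqmono : StrictMono q := by
      rw [Fin.strictMono_iff_lt_succ]
      intro i
      refine Fin.cases ?_ (fun j => ?_) i
      · rw [show (Fin.castSucc (0 : Fin (l.length + 1))) = (0 : Fin (l.length + 2)) from rfl,
          hq0, hqs 0]
        refine Ne.bot_lt ?_
        intro h
        exact hI (le_bot_iff.mp (h ▸ hgI 0))
      · rw [Fin.castSucc_fin_succ, hqs, hqs]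
        exact hgmono (Fin.castSucc_lt_succ (i := j))
    exact no_long_prime_chain n (l.length + 2) (by omega) q hqprime hqmono
  -- now bound the Krull dimension
  rcases isEmpty_or_nonempty (PrimeSpectrum (MvPolynomial (Fin n) K ⧸ I)) with he | hne
  · rw [ringKrullDim, Order.krullDim_eq_bot]
    exact lt_of_lt_of_eq (WithBot.bot_lt_coe (n : ℕ∞)) (WithBot.coe_natCast n)
  · have hn1 : 1 ≤ n := by
      obtain ⟨p⟩ := hne
      simpa using hlen (RelSeries.singleton _ p)
    rw [ringKrullDim, Order.krullDim]
    have hsup : ⨆ (p : LTSeries (PrimeSpectrum (MvPolynomial (Fin n) K ⧸ I))),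
        (p.length : WithBot ℕ∞) ≤ ((n - 1 : ℕ) : WithBot ℕ∞) := by
      refine iSup_le fun p => ?_
      have := hlen p
      exact_mod_cast (by omega : p.length ≤ n - 1)
    refine lt_of_le_of_lt hsup ?_
    exact_mod_cast (by omega : n - 1 < n)


/-- Evaluation of the composite of `f` with the parametrized line `t ↦ w + t u`. -/
lemma line_eval {M : ℕ} (w u : Fin (M + 1) → ℂ) (f : MvPolynomial (Fin (M + 1)) ℂ) (t : ℂ) :
    Polynomial.eval t (MvPolynomial.aeval
        (fun i => Polynomial.C (w i) + Polynomial.C (u i) * Polynomial.X) f)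
      = eval (w + t • u) f := by
  have h : ((Polynomial.aeval t).comp (MvPolynomial.aeval
      (fun i => Polynomial.C (w i) + Polynomial.C (u i) * Polynomial.X)) :
      MvPolynomial (Fin (M + 1)) ℂ →ₐ[ℂ] ℂ) = MvPolynomial.aeval (w + t • u) := by
    refine MvPolynomial.algHom_ext fun i => ?_
    simp only [AlgHom.comp_apply, MvPolynomial.aeval_X, map_add, map_mul,
      Polynomial.aeval_C, Polynomial.aeval_X, Pi.add_apply, Pi.smul_apply, smul_eq_mul,
      Algebra.algebraMap_self, RingHom.id_apply]
    ring
  have h2 := congrArg (fun g : MvPolynomial (Fin (M + 1)) ℂ →ₐ[ℂ] ℂ => g f) h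
  simp only [AlgHom.comp_apply] at h2
  exact h2

/-- Chain rule: derivative at `0` of `f` along the line `t ↦ w + t u`. -/
lemma line_deriv {M : ℕ} (w u : Fin (M + 1) → ℂ) (f : MvPolynomial (Fin (M + 1)) ℂ) :
    Polynomial.eval 0 (Polynomial.derivative (MvPolynomial.aeval
        (fun i => Polynomial.C (w i) + Polynomial.C (u i) * Polynomial.X) f))
      = ∑ i, u i * eval w (pderiv i f) := by
  set L : Fin (M + 1) → Polynomial ℂ :=
    fun i => Polynomial.C (w i) + Polynomial.C (u i) * Polynomial.X with hL
  induction f using MvPolynomial.induction_on with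
  | C a => simp
  | add p q hp hq =>
    simp only [map_add, Polynomial.derivative_add, Polynomial.eval_add, hp, hq]
    rw [← Finset.sum_add_distrib]
    exact Finset.sum_congr rfl fun i _ => by ring
  | mul_X p i hp =>
    have haevalX : MvPolynomial.aeval L (p * X i) = MvPolynomial.aeval L p * L i := by
      simp [hL]
    rw [haevalX, Polynomial.derivative_mul, Polynomial.eval_add, Polynomial.eval_mul,
      Polynomial.eval_mul, hp]
    have h1 : Polynomial.eval 0 (L i) = w i := by simp [hL]
    have h2 : Polynomial.eval 0 (Polynomial.derivative (L i)) = u i := by simp [hL]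
    have h3 : Polynomial.eval 0 (MvPolynomial.aeval L p) = eval w p := by
      have := line_eval w u p 0
      simpa using this
    rw [h1, h2, h3]
    have expand : ∀ j, u j * eval w (pderiv j (p * X i))
        = u j * (eval w (pderiv j p) * w i) + (if i = j then u j * eval w p else 0) := by
      intro j
      have h4 : pderiv j (p * X i) = pderiv j p * X i + p * pderiv j (X i) := by
        simp only [pderiv_mul]
      rw [h4]
      simp only [map_add, map_mul, pderiv_X, Pi.single_apply, eval_X, apply_ite (eval w),
        map_one, map_zero]
      split <;> ring
    rw [Finset.sum_congr rfl fun j _ => expand j, Finset.sum_add_distrib,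
      Finset.sum_ite_eq Finset.univ i (fun j => u j * eval w p)]
    simp only [Finset.mem_univ, if_true]
    rw [Finset.sum_mul]
    congr 1
    · exact Finset.sum_congr rfl fun j _ => by ring
    · ring


/-- For an irreducible non-degenerate projective variety `X ⊆ ℙ^M` whose
`r`-th secant variety is not a linear space, and `r ≥ 2`, every point of `σ_{r-1}(X)` is a
singular point of `σ_r(X)`. -/
theorem sing_secant_contains_lower_secant (M r : ℕ) (hr : 2 ≤ r)
    (X : Set (Fin (M + 1) → ℂ))
    (hXclosed : X = zariskiClosure X)
    (hXcone : ∀ c : ℂ, ∀ x ∈ X, c • x ∈ X)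
    (hXirr : (vanishingIdeal ℂ X).IsPrime)
    (hXnondeg : Submodule.span ℂ X = ⊤)
    (hXnotlin : ¬ ∃ W : Submodule ℂ (Fin (M + 1) → ℂ), secantCone r X = (W : Set _)) :
    ∀ x ∈ secantCone (r - 1) X, x ≠ 0 → IsSingularPoint (secantCone r X) x := by
  intro x hx hx0
  obtain ⟨s, rfl⟩ : ∃ s, r = s + 1 := ⟨r - 1, by omega⟩
  have hx' : x ∈ secantCone s X := by simpa using hx
  set Sr : Set (Fin (M + 1) → ℂ) := {v | ∃ f : Fin (s + 1) → (Fin (M + 1) → ℂ),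
    (∀ i, f i ∈ X) ∧ v ∈ Submodule.span ℂ (Set.range f)} with hSr
  set Ss : Set (Fin (M + 1) → ℂ) := {v | ∃ f : Fin s → (Fin (M + 1) → ℂ),
    (∀ i, f i ∈ X) ∧ v ∈ Submodule.span ℂ (Set.range f)} with hSs
  -- Step 1: the Zariski tangent space at `x` is everything (Terracini-type argument)
  have htan : zariskiTangent (secantCone (s + 1) X) x = ⊤ := by
    rw [eq_top_iff, ← hXnondeg, Submodule.span_le]
    intro u hu
    show u ∈ (zariskiTangent (secantCone (s + 1) X) x : Set _)
    intro f hf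
    -- `f` vanishes on the (unclosed) set `Sr`
    have hfv : ∀ v ∈ Sr, eval v f = 0 := by
      intro v hv
      exact (mem_vanishingIdeal_iff.mp hf) v (zeroLocus_vanishingIdeal_le (k := ℂ) Sr hv)
    -- the directional derivative polynomial
    set g : MvPolynomial (Fin (M + 1)) ℂ := ∑ i, MvPolynomial.C (u i) * pderiv i f with hg
    have hgvan : g ∈ vanishingIdeal ℂ Ss := by
      rw [mem_vanishingIdeal_iff]
      intro w hw
      obtain ⟨p, hpX, hwspan⟩ := hw
      -- the line `t ↦ w + t u` lies in `Sr`
      have hline : ∀ t : ℂ, w + t • u ∈ Sr := by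
        intro t
        refine ⟨Fin.snoc p u, ?_, ?_⟩
        · intro i
          refine Fin.lastCases ?_ (fun j => ?_) i
          · rw [Fin.snoc_last]; exact hu
          · rw [Fin.snoc_castSucc]; exact hpX j
        · have hp_le : Submodule.span ℂ (Set.range p) ≤
              Submodule.span ℂ (Set.range (Fin.snoc p u : Fin (s + 1) → _)) := by
            refine Submodule.span_mono ?_
            rintro _ ⟨j, rfl⟩
            exact ⟨j.castSucc, Fin.snoc_castSucc _ _ _⟩
          refine Submodule.add_mem _ (hp_le hwspan) (Submodule.smul_mem _ _ ?_)
          exact Submodule.subset_span ⟨Fin.last s, Fin.snoc_last _ _⟩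
      -- the composite polynomial along the line is identically zero
      have hq0 : (MvPolynomial.aeval
          (fun i => Polynomial.C (w i) + Polynomial.C (u i) * Polynomial.X) f) = 0 := by
        refine Polynomial.funext fun t => ?_
        rw [line_eval, Polynomial.eval_zero]
        exact hfv _ (hline t)
      have hder := line_deriv w u f
      rw [hq0, map_zero, Polynomial.eval_zero] at hder
      rw [hg, map_sum]
      simp only [map_mul, aeval_C, Algebra.algebraMap_self, RingHom.id_apply]
      exact hder.symm
    have hgx : eval x g = 0 := hx' g hgvan
    rw [hg, map_sum] at hgx
    simp only [eval_mul, eval_C] at hgx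
    exact hgx
  -- Step 2: the vanishing ideal of the secant cone is nonzero
  have hJ : vanishingIdeal ℂ Sr ≠ ⊥ := by
    intro h
    refine hXnotlin ⟨⊤, ?_⟩
    rw [show secantCone (s + 1) X = zeroLocus ℂ (vanishingIdeal ℂ Sr) from rfl, h, zeroLocus_bot]
    simp
  have hVI : vanishingIdeal ℂ (secantCone (s + 1) X) ≠ ⊥ := by
    intro h
    apply hJ
    refine le_bot_iff.mp ?_
    refine le_trans (le_vanishingIdeal_zeroLocus (K := ℂ) (vanishingIdeal ℂ Sr)) ?_
    rw [show zeroLocus ℂ (vanishingIdeal ℂ Sr) = secantCone (s + 1) X from rfl, h]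
  have hdim : ringKrullDim (coordRing (secantCone (s + 1) X)) < ((M + 1 : ℕ) : WithBot ℕ∞) :=
    ringKrullDim_quotient_lt (M + 1) _ hVI
  -- conclude
  rw [IsSingularPoint]
  have hfr : Module.finrank ℂ (zariskiTangent (secantCone (s + 1) X) x) = M + 1 := by
    rw [htan]
    rw [finrank_top]
    simp [Module.finrank_pi]
  rw [hfr]
  exact_mod_cast hdim
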